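/- Let F be a field whose characteristic does not divide k, and let V, e₀,...,e_{n-1}, p be as in the frame representation with n = |X| > 2k and A a proper subset of X with |A| > 2k. Then the subspace of V spanned by {p_a : a ∈ Sub_k(A)} (the points associated to k-element subsets of A) equals the subspace spanned by {p_{{x}} : x ∈ A} = span{e_x : x ∈ A} (taking e₀ = Σᵢ₌₁^{n-1} eᵢ). -/

import Mathlib

/-- The representing vector of the projective point `p_c`: for a subset `c` of
`X = {0,…,n-1}` it is `Σ_{j∈c} e j` when `0 ∉ c`, and (using `p_c = p_{X∖c}`)
`Σ_{j∈cᶜ} e j` when `0 ∈ c`. -/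
def pVec {V : Type*} [AddCommMonoid V] {n : ℕ} [NeZero n]
    (e : Fin n → V) (c : Finset (Fin n)) : V :=
  if (0 : Fin n) ∈ c then ∑ j ∈ cᶜ, e j else ∑ j ∈ c, e j

/-- If `char F ∤ k`, `k > 1`, and `A` is a proper subset of `X` with `|A| > 2k`, then the
span of the points `p_a` for `k`-element subsets `a ⊆ A` equals the span of
`{e_x : x ∈ A}`. -/
theorem span_k_subsets_eq {F V : Type*} [Field F] [AddCommGroup V] [Module F V]
    (n k : ℕ) [NeZero n] (e : Fin n → V)
    (hli : LinearIndependent F (fun i : {i : Fin n // i ≠ 0} => e i.1))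
    (h0 : e 0 = ∑ i ∈ Finset.univ.erase (0 : Fin n), e i)
    (hk : 1 < k) (hchar : (k : F) ≠ 0)
    (A : Finset (Fin n)) (hA : A ⊂ Finset.univ) (hAcard : 2 * k < A.card) :
    Submodule.span F
        {v : V | ∃ a : Finset (Fin n), a ⊆ A ∧ a.card = k ∧ v = pVec e a} =
      Submodule.span F (e '' ↑A) := by
  set S := Submodule.span F
      {v : V | ∃ a : Finset (Fin n), a ⊆ A ∧ a.card = k ∧ v = pVec e a} with hS
  set B := A.erase 0 with hB
  have hBA : B ⊆ A := Finset.erase_subset _ _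
  have hB0 : (0 : Fin n) ∉ B := Finset.notMem_erase _ _
  have hBcard : 2 * k ≤ B.card := by
    have h := Finset.pred_card_le_card_erase (a := (0 : Fin n)) (s := A)
    rw [← hB] at h
    omega
  -- key computation when `0 ∈ a`
  have key : ∀ a : Finset (Fin n), (0 : Fin n) ∈ a →
      ∑ j ∈ aᶜ, e j = e 0 - ∑ j ∈ a.erase 0, e j := by
    intro a h0a
    have h1 : ∑ j ∈ a, e j + ∑ j ∈ aᶜ, e j = ∑ j, e j :=
      Finset.sum_add_sum_compl a _
    have h3 : ∑ j ∈ a, e j = e 0 + ∑ j ∈ a.erase 0, e j :=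
      (Finset.add_sum_erase _ _ h0a).symm
    have h2 : (∑ j, e j) = e 0 + e 0 := by
      rw [← Finset.add_sum_erase _ _ (Finset.mem_univ (0 : Fin n)), ← h0]
    rw [h3, h2, add_assoc] at h1
    have h4 := add_left_cancel h1
    rw [add_comm] at h4
    exact eq_sub_of_add_eq h4
  -- differences of basis vectors over B lie in S
  have hdiff : ∀ x ∈ B, ∀ y ∈ B, e x - e y ∈ S := by
    intro x hx y hy
    rcases eq_or_ne x y with rfl | hxy
    · simp
    have hcard : k - 1 ≤ ((B.erase x).erase y).card := by
      have h1 := Finset.pred_card_le_card_erase (a := y) (s := B.erase x)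
      have h2 := Finset.pred_card_le_card_erase (a := x) (s := B)
      omega
    obtain ⟨t, ht, htcard⟩ := Finset.exists_subset_card_eq hcard
    have htB : t ⊆ B := ht.trans ((Finset.erase_subset _ _).trans (Finset.erase_subset _ _))
    have hxt : x ∉ t := by
      intro h
      exact absurd (Finset.mem_erase.1 ((Finset.erase_subset _ _) (ht h))).1 (by simp)
    have hyt : y ∉ t := by
      intro h
      exact absurd (Finset.mem_erase.1 (ht h)).1 (by simp)
    have hx0 : x ≠ 0 := (Finset.mem_erase.1 hx).1
    have hy0 : y ≠ 0 := (Finset.mem_erase.1 hy).1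
    have h0t : (0 : Fin n) ∉ t := fun h => hB0 (htB h)
    have ha : pVec e (insert x t) = e x + ∑ j ∈ t, e j := by
      have : (0 : Fin n) ∉ insert x t := by
        simp only [Finset.mem_insert, not_or]
        exact ⟨fun h => hx0 h.symm, h0t⟩
      rw [pVec, if_neg this, Finset.sum_insert hxt]
    have hb : pVec e (insert y t) = e y + ∑ j ∈ t, e j := by
      have : (0 : Fin n) ∉ insert y t := by
        simp only [Finset.mem_insert, not_or]
        exact ⟨fun h => hy0 h.symm, h0t⟩
      rw [pVec, if_neg this, Finset.sum_insert hyt]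
    have hmema : pVec e (insert x t) ∈ S :=
      Submodule.subset_span ⟨insert x t,
        (Finset.insert_subset (hBA hx) (htB.trans hBA)),
        by rw [Finset.card_insert_of_notMem hxt, htcard]; omega, rfl⟩
    have hmemb : pVec e (insert y t) ∈ S :=
      Submodule.subset_span ⟨insert y t,
        (Finset.insert_subset (hBA hy) (htB.trans hBA)),
        by rw [Finset.card_insert_of_notMem hyt, htcard]; omega, rfl⟩
    have : e x - e y = pVec e (insert x t) - pVec e (insert y t) := by
      rw [ha, hb]; abel
    rw [this]
    exact Submodule.sub_mem _ hmema hmemb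
  -- basis vectors over B lie in S
  have hmemB : ∀ x ∈ B, e x ∈ S := by
    obtain ⟨a0, ha0B, ha0card⟩ := Finset.exists_subset_card_eq (show k ≤ B.card by omega)
    intro x hx
    have h0a : (0 : Fin n) ∉ a0 := fun h => hB0 (ha0B h)
    have hp : pVec e a0 = ∑ j ∈ a0, e j := if_neg h0a
    have hsum : ∑ j ∈ a0, (e j - e x) ∈ S :=
      Submodule.sum_mem _ fun j hj => hdiff j (ha0B hj) x hx
    have hkx : (k : F) • e x ∈ S := by
      have heq : (k : F) • e x = pVec e a0 - ∑ j ∈ a0, (e j - e x) := by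
        rw [hp, Finset.sum_sub_distrib, Finset.sum_const, ha0card, sub_sub_cancel,
          Nat.cast_smul_eq_nsmul]
      rw [heq]
      exact Submodule.sub_mem _
        (Submodule.subset_span ⟨a0, ha0B.trans hBA, ha0card, rfl⟩) hsum
    have := Submodule.smul_mem S (k : F)⁻¹ hkx
    rwa [inv_smul_smul₀ hchar] at this
  -- all basis vectors over A lie in S
  have hmemA : ∀ x ∈ A, e x ∈ S := by
    intro x hx
    rcases ne_or_eq x 0 with hx0 | rfl
    · exact hmemB x (Finset.mem_erase.2 ⟨hx0, hx⟩)
    obtain ⟨t, htB, htcard⟩ := Finset.exists_subset_card_eq (show k - 1 ≤ B.card by omega)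
    have h0t : (0 : Fin n) ∉ t := fun h => hB0 (htB h)
    have haA : insert (0 : Fin n) t ⊆ A := Finset.insert_subset hx (htB.trans hBA)
    have hacard : (insert (0 : Fin n) t).card = k := by
      rw [Finset.card_insert_of_notMem h0t, htcard]; omega
    have hpa : pVec e (insert (0 : Fin n) t) = e 0 - ∑ j ∈ t, e j := by
      have h0a : (0 : Fin n) ∈ insert (0 : Fin n) t := Finset.mem_insert_self _ _
      rw [pVec, if_pos h0a, key _ h0a, Finset.erase_insert h0t]
    have : e 0 = pVec e (insert (0 : Fin n) t) + ∑ j ∈ t, e j := by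
      rw [hpa]; abel
    rw [this]
    exact Submodule.add_mem _
      (Submodule.subset_span ⟨insert (0 : Fin n) t, haA, hacard, rfl⟩)
      (Submodule.sum_mem _ fun j hj => hmemB j (htB hj))
  apply le_antisymm
  · rw [Submodule.span_le]
    rintro v ⟨a, haA, hacard, rfl⟩
    by_cases h0a : (0 : Fin n) ∈ a
    · have : pVec e a = e 0 - ∑ j ∈ a.erase 0, e j := by
        rw [pVec, if_pos h0a]; exact key a h0a
      rw [this]
      exact Submodule.sub_mem _
        (Submodule.subset_span ⟨0, Finset.mem_coe.2 (haA h0a), rfl⟩)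
        (Submodule.sum_mem _ fun j hj => Submodule.subset_span
          ⟨j, Finset.mem_coe.2 (haA (Finset.mem_of_mem_erase hj)), rfl⟩)
    · rw [show pVec e a = ∑ j ∈ a, e j from if_neg h0a]
      exact Submodule.sum_mem _ fun j hj => Submodule.subset_span
        ⟨j, Finset.mem_coe.2 (haA hj), rfl⟩
  · rw [Submodule.span_le]
    rintro v ⟨x, hx, rfl⟩
    exact hmemA x (Finset.mem_coe.1 hx)
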